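/- Let Ω be a q-closed sesquilinear form on D with respect to ‖·‖_Ω satisfying the condition (qc): whenever (ξₙ) in D satisfies ‖ξₙ‖ → 0 and |Ω(ξₙ,ξₙ)| → 0, then ‖ξₙ‖_Ω → 0. Let Υ be a bounded sesquilinear form on H such that the closure of the numerical range of Ω is disjoint from the closure of the numerical range of -Υ. Then Υ ∈ P₀(Ω); in particular Ω is solvable with respect to ‖·‖_Ω. -/

import Mathlib

noncomputable section

open Filter Topology Function
open scoped InnerProductSpace

namespace Paper

variable {V : Type} [AddCommGroup V] [Module ℂ V]

/-- `n` is a norm on the complex vector space `V`. -/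
def IsNormFn (n : V → ℝ) : Prop :=
  (∀ x : V, n x = 0 ↔ x = 0) ∧
    (∀ (c : ℂ) (x : V), n (c • x) = ‖c‖ * n x) ∧
      ∀ x y : V, n (x + y) ≤ n x + n y

/-- `ξ` is a Cauchy sequence with respect to the norm `n`. -/
def IsCauchyWrt (n : V → ℝ) (ξ : ℕ → V) : Prop :=
  ∀ ε : ℝ, 0 < ε → ∃ N : ℕ, ∀ p q : ℕ, N ≤ p → N ≤ q → n (ξ p - ξ q) < ε

/-- `ξ` tends to `x` with respect to the norm `n`. -/
def TendstoWrt (n : V → ℝ) (ξ : ℕ → V) (x : V) : Prop :=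
  Tendsto (fun k => n (ξ k - x)) atTop (𝓝 0)

/-- `V` is complete with respect to the norm `n`. -/
def CompleteWrt (n : V → ℝ) : Prop :=
  ∀ ξ : ℕ → V, IsCauchyWrt n ξ → ∃ x : V, TendstoWrt n ξ x

/-- The two norms `n₁` and `n₂` are equivalent. -/
def EquivNorms (n₁ n₂ : V → ℝ) : Prop :=
  ∃ c₁ : ℝ, 0 < c₁ ∧ ∃ c₂ : ℝ, 0 < c₂ ∧ ∀ x : V, n₁ x ≤ c₁ * n₂ x ∧ n₂ x ≤ c₂ * n₁ x

/-- `Ω` is a sesquilinear form: linear in the first entry, conjugate-linear in the second. -/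
def IsSesq (Ω : V → V → ℂ) : Prop :=
  (∀ η : V, IsLinearMap ℂ fun ξ => Ω ξ η) ∧
    ∀ ξ : V, IsLinearMap ℂ fun η => (starRingEnd ℂ) (Ω ξ η)

/-- `T` is a positive form: `T(ξ,ξ) ≥ 0` for every `ξ`. -/
def IsPositiveForm (T : V → V → ℂ) : Prop :=
  ∀ x : V, (T x x).im = 0 ∧ 0 ≤ (T x x).re

/-- The norm `n` is compatible with the positive sesquilinear form `T`. -/
def CompatibleWithForm (T : V → V → ℂ) (n : V → ℝ) : Prop :=
  (∃ α : ℝ, 0 < α ∧ ∀ ξ : V, (T ξ ξ).re ≤ α * n ξ ^ 2) ∧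
    ∀ ξ : ℕ → V, Tendsto (fun k => (T (ξ k) (ξ k)).re) atTop (𝓝 0) →
      IsCauchyWrt n ξ → Tendsto (fun k => n (ξ k)) atTop (𝓝 0)

/-- A realization of `(V, n)` as a dense subspace of a reflexive Banach space `E`. -/
structure BanachModel (V : Type) [AddCommGroup V] [Module ℂ V] (n : V → ℝ) : Type 1 where
  E : Type
  [instGroup : NormedAddCommGroup E]
  [instSpace : NormedSpace ℂ E]
  [instComplete : CompleteSpace E]
  j : V →ₗ[ℂ] E
  isometry : ∀ x : V, ‖j x‖ = n x
  dense : DenseRange j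
  reflexive : Surjective (NormedSpace.inclusionInDoubleDual ℂ E)

/-- `V` endowed with the norm `n` is a reflexive Banach space. -/
def IsReflexiveBanachWrt (n : V → ℝ) : Prop :=
  ∃ M : BanachModel V n, Surjective M.j

/-- The completion of `V` with respect to the norm `n` is a reflexive Banach space. -/
def CompletionIsReflexiveBanach (n : V → ℝ) : Prop :=
  Nonempty (BanachModel V n)

variable {H : Type} [NormedAddCommGroup H] [InnerProductSpace ℂ H]

/-- The embedding of `D[n]` into `H` is continuous. -/
def EmbedsContinuously (D : Submodule ℂ H) (n : D → ℝ) : Prop :=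
  ∃ α : ℝ, 0 < α ∧ ∀ ξ : D, ‖(ξ : H)‖ ≤ α * n ξ

/-- The norm `n` on `D` is compatible with the inner product of `H`. -/
def CompatibleWithInner (D : Submodule ℂ H) (n : D → ℝ) : Prop :=
  EmbedsContinuously D n ∧
    ∀ ξ : ℕ → D, Tendsto (fun k => ‖(ξ k : H)‖) atTop (𝓝 0) →
      IsCauchyWrt n ξ → Tendsto (fun k => n (ξ k)) atTop (𝓝 0)

/-- The form `Ω` is bounded on `D[n]`. -/
def BoundedOn (D : Submodule ℂ H) (Ω : D → D → ℂ) (n : D → ℝ) : Prop :=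
  ∃ β : ℝ, 0 < β ∧ ∀ ξ η : D, ‖Ω ξ η‖ ≤ β * n ξ * n η

/-- `Ω` is q-closed with respect to the norm `n` (Definition 5.2 of Di Bella–Trapani). -/
def IsQClosed (D : Submodule ℂ H) (Ω : D → D → ℂ) (n : D → ℝ) : Prop :=
  IsNormFn n ∧ CompatibleWithInner D n ∧ IsReflexiveBanachWrt n ∧ BoundedOn D Ω n

/-- `Ω` is q-closable with respect to the norm `n`. -/
def IsQClosable (D : Submodule ℂ H) (Ω : D → D → ℂ) (n : D → ℝ) : Prop :=
  IsNormFn n ∧ CompatibleWithInner D n ∧ CompletionIsReflexiveBanach n ∧ BoundedOn D Ω n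

/-- `Λ` is a bounded conjugate-linear functional on `D[n]`,
i.e. an element of the conjugate dual of `D[n]`. -/
def MemConjDual (D : Submodule ℂ H) (n : D → ℝ) (Λ : D → ℂ) : Prop :=
  (∀ x y : D, Λ (x + y) = Λ x + Λ y) ∧
    (∀ (c : ℂ) (x : D), Λ (c • x) = (starRingEnd ℂ) c * Λ x) ∧
      ∃ C : ℝ, ∀ x : D, ‖Λ x‖ ≤ C * n x

/-- `Υ` is a bounded sesquilinear form on `H`. -/
def IsBoundedForm (Υ : H → H → ℂ) : Prop :=
  IsSesq Υ ∧ ∃ C : ℝ, ∀ x y : H, ‖Υ x y‖ ≤ C * ‖x‖ * ‖y‖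

/-- `Υ ∈ P₀(Ω)`: `N(Ω+Υ) = {0}` and every element of the conjugate dual of `D[n]`
is represented by `Ω+Υ`. -/
def InP0 (D : Submodule ℂ H) (Ω : D → D → ℂ) (n : D → ℝ) (Υ : H → H → ℂ) : Prop :=
  (∀ ξ : D, (∀ η : D, Ω ξ η + Υ ↑ξ ↑η = 0) → ξ = 0) ∧
    ∀ Λ : D → ℂ, MemConjDual D n Λ → ∃ ξ : D, ∀ η : D, Λ η = Ω ξ η + Υ ↑ξ ↑η

/-- `Ω` is solvable with respect to the norm `n`. -/
def IsSolvable (D : Submodule ℂ H) (Ω : D → D → ℂ) (n : D → ℝ) : Prop :=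
  IsQClosed D Ω n ∧ ∃ Υ : H → H → ℂ, IsBoundedForm Υ ∧ InP0 D Ω n Υ

/-- The numerical range of a form on `D`. -/
def NumRangeForm (D : Submodule ℂ H) (Ω : D → D → ℂ) : Set ℂ :=
  {z : ℂ | ∃ ξ : D, ‖(ξ : H)‖ = 1 ∧ z = Ω ξ ξ}

/-- The numerical range of a form on `H`. -/
def NumRangeFormH (Υ : H → H → ℂ) : Set ℂ :=
  {z : ℂ | ∃ x : H, ‖x‖ = 1 ∧ z = Υ x x}

/-- `sup { |Θ(ξ,η)| : ‖η‖_Ω = 1 }`. -/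
def FormSup (D : Submodule ℂ H) (Θ : D → D → ℂ) (n : D → ℝ) (ξ : D) : ℝ :=
  sSup {r : ℝ | ∃ η : D, n η = 1 ∧ r = ‖Θ ξ η‖}

end Paper

namespace Paper

open Metric in
/-- Hahn-Banach separation of a point from a closed subspace. -/
lemma sep_lemma' {F : Type*} [NormedAddCommGroup F] [NormedSpace ℂ F]
    (p : Submodule ℂ F) (hp : IsClosed (p : Set F)) (x : F) (hx : x ∉ p) :
    ∃ g : F →L[ℂ] ℂ, g x ≠ 0 ∧ ∀ y ∈ p, g y = 0 := by
  haveI : IsClosed (p : Set F) := hp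
  have hx0 : (Submodule.Quotient.mk x : F ⧸ p) ≠ 0 := by
    simpa [Submodule.Quotient.mk_eq_zero] using hx
  obtain ⟨φ, -, hφx⟩ := exists_dual_vector ℂ (Submodule.Quotient.mk x : F ⧸ p) (norm_ne_zero_iff.mpr hx0)
  have hcont : Continuous (p.mkQ) := by
    refine AddMonoidHomClass.continuous_of_bound p.mkQ 1 fun m => ?_
    simpa using Submodule.Quotient.norm_mk_le p m
  let q : F →L[ℂ] (F ⧸ p) := ⟨p.mkQ, hcont⟩
  refine ⟨φ.comp q, ?_, ?_⟩
  · have : φ (Submodule.Quotient.mk x) = ‖(Submodule.Quotient.mk x : F ⧸ p)‖ := hφx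
    simp only [ContinuousLinearMap.comp_apply]
    show φ (p.mkQ x) ≠ 0
    rw [Submodule.mkQ_apply, this]
    exact_mod_cast (norm_ne_zero_iff.mpr hx0)
  · intro y hy
    show φ (p.mkQ y) = 0
    rw [Submodule.mkQ_apply, (Submodule.Quotient.mk_eq_zero p).mpr hy, map_zero]

/-- Conjugate-linearity in the second slot. -/
lemma sesq_smul_right {V : Type} [AddCommGroup V] [Module ℂ V] {B : V → V → ℂ}
    (h2 : ∀ ξ : V, IsLinearMap ℂ fun η => (starRingEnd ℂ) (B ξ η)) (ξ : V) (c : ℂ) (η : V) :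
    B ξ (c • η) = (starRingEnd ℂ) c * B ξ η := by
  have := (h2 ξ).map_smul c η
  have h := congrArg (starRingEnd ℂ) this
  simpa [map_mul, Complex.conj_conj] using h

lemma sesq_scale {V : Type} [AddCommGroup V] [Module ℂ V] {B : V → V → ℂ}
    (hB : IsSesq B) (c : ℂ) (x : V) :
    B (c • x) (c • x) = (c * (starRingEnd ℂ) c) * B x x := by
  have h1 : B (c • x) (c • x) = c • B x (c • x) := (hB.1 (c • x)).map_smul c x
  rw [h1, sesq_smul_right hB.2, smul_eq_mul]
  ring

end Paper

namespace Paper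

set_option maxHeartbeats 1000000 in
theorem solvable_of_qc_condition {H : Type} [NormedAddCommGroup H] [InnerProductSpace ℂ H]
    [CompleteSpace H] (D : Submodule ℂ H) (hD : Dense (D : Set H))
    (Ω : ↥D → ↥D → ℂ) (hsesq : IsSesq Ω) (n : ↥D → ℝ) (hq : IsQClosed D Ω n)
    (hqc : ∀ ξ : ℕ → ↥D, Tendsto (fun k => ‖(ξ k : H)‖) atTop (𝓝 0) →
      Tendsto (fun k => ‖Ω (ξ k) (ξ k)‖) atTop (𝓝 0) →
        Tendsto (fun k => n (ξ k)) atTop (𝓝 0))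
    (Υ : H → H → ℂ) (hΥ : IsBoundedForm Υ)
    (hdisj : closure (NumRangeForm D Ω) ∩ closure (NumRangeFormH (fun x y => -Υ x y)) = ∅) :
    InP0 D Ω n Υ ∧ IsSolvable D Ω n := by
  classical
  obtain ⟨hnorm, hcompat, hreflB, hbound⟩ := hq
  obtain ⟨⟨α, hα, hemb⟩, hcomp2⟩ := hcompat
  obtain ⟨β, hβ, hΩb⟩ := hbound
  obtain ⟨hΥsesq, C, hΥb⟩ := hΥ
  set T : ↥D → ↥D → ℂ := fun ξ η => Ω ξ η + Υ ↑ξ ↑η with hT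
  have hTscale : ∀ (c : ℂ) (ξ : ↥D), T (c • ξ) (c • ξ) = (c * (starRingEnd ℂ) c) * T ξ ξ := by
    intro c ξ
    have h1 := sesq_scale hsesq c ξ
    have h2 := sesq_scale hΥsesq c (ξ : H)
    have hcoe : ((c • ξ : ↥D) : H) = c • (ξ : H) := rfl
    simp only [hT, hcoe, h1, h2, mul_add]
  -- Step 1: coercivity on the H-norm
  obtain ⟨d, hdpos, hdle⟩ : ∃ d : ℝ, 0 < d ∧ ∀ ξ : ↥D, d * ‖(ξ : H)‖ ^ 2 ≤ ‖T ξ ξ‖ := by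
    by_cases htriv : ∀ ξ : ↥D, (ξ : H) = 0
    · exact ⟨1, one_pos, fun ξ => by simp [htriv ξ]⟩
    · push_neg at htriv
      obtain ⟨ξ₀, hξ₀⟩ := htriv
      have hr₀ : ‖(ξ₀ : H)‖ ≠ 0 := norm_ne_zero_iff.mpr hξ₀
      set u₀ : ↥D := ((‖(ξ₀ : H)‖⁻¹ : ℝ) : ℂ) • ξ₀ with hu₀def
      have hu₀ : ‖(u₀ : H)‖ = 1 := by
        have h : ((u₀ : H)) = ((‖(ξ₀ : H)‖⁻¹ : ℝ) : ℂ) • (ξ₀ : H) := rfl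
        rw [h, norm_smul, Complex.norm_real, Real.norm_eq_abs, abs_inv,
          abs_of_nonneg (norm_nonneg _), inv_mul_cancel₀ hr₀]
      set S := closure (NumRangeForm D Ω) with hS
      set K := closure (NumRangeFormH (fun x y => -Υ x y)) with hK
      have hSne : S.Nonempty := ⟨Ω u₀ u₀, subset_closure ⟨u₀, hu₀, rfl⟩⟩
      have hKne : K.Nonempty := ⟨-Υ u₀ u₀, subset_closure ⟨(u₀ : H), hu₀, rfl⟩⟩
      have hKb : K ⊆ Metric.closedBall 0 C := by
        refine closure_minimal ?_ Metric.isClosed_closedBall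
        rintro z ⟨x, hx, rfl⟩
        simp only [Metric.mem_closedBall, dist_zero_right]
        calc ‖-Υ x x‖ = ‖Υ x x‖ := norm_neg _
          _ ≤ C * ‖x‖ * ‖x‖ := hΥb x x
          _ = C := by rw [hx]; ring
      have hKcomp : IsCompact K :=
        (isCompact_closedBall (0 : ℂ) C).of_isClosed_subset isClosed_closure hKb
      obtain ⟨w₀, hw₀K, hmin⟩ :=
        hKcomp.exists_isMinOn hKne (Metric.continuous_infDist_pt S).continuousOn
      have hw₀S : w₀ ∉ S := fun h =>
        (Set.eq_empty_iff_forall_notMem.mp hdisj w₀) ⟨h, hw₀K⟩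
      have hdpos : 0 < Metric.infDist w₀ S :=
        (isClosed_closure.notMem_iff_infDist_pos hSne).mp hw₀S
      refine ⟨Metric.infDist w₀ S, hdpos, fun ξ => ?_⟩
      by_cases hξ : (ξ : H) = 0
      · simp [hξ]
      · set r := ‖(ξ : H)‖ with hrdef
        have hr : 0 < r := norm_pos_iff.mpr hξ
        set u : ↥D := ((r⁻¹ : ℝ) : ℂ) • ξ with hudef
        have hu : ‖(u : H)‖ = 1 := by
          have h : ((u : H)) = ((r⁻¹ : ℝ) : ℂ) • (ξ : H) := rfl
          rw [h, norm_smul, Complex.norm_real, Real.norm_eq_abs, abs_inv,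
            abs_of_nonneg (norm_nonneg _)]
          exact inv_mul_cancel₀ hr.ne'
        have hξu : ξ = ((r : ℝ) : ℂ) • u := by
          rw [hudef, smul_smul, ← Complex.ofReal_mul, mul_inv_cancel₀ hr.ne']
          simp
        have hΩS : Ω u u ∈ S := subset_closure ⟨u, hu, rfl⟩
        have hΥK : -Υ ↑u ↑u ∈ K := subset_closure ⟨(u : H), hu, rfl⟩
        have hdist : Metric.infDist w₀ S ≤ ‖T u u‖ := by
          calc Metric.infDist w₀ S ≤ Metric.infDist (-Υ ↑u ↑u) S := hmin hΥK
            _ ≤ dist (-Υ ↑u ↑u) (Ω u u) := Metric.infDist_le_dist_of_mem hΩS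
            _ = ‖T u u‖ := by
                rw [dist_eq_norm, ← norm_neg]
                congr 1
                simp only [hT]
                ring
        have hTsc : ‖T ξ ξ‖ = r ^ 2 * ‖T u u‖ := by
          rw [hξu, hTscale, norm_mul]
          congr 1
          rw [Complex.conj_ofReal, ← Complex.ofReal_mul, Complex.norm_real,
            Real.norm_eq_abs, abs_of_nonneg (mul_nonneg hr.le hr.le), sq]
        rw [hTsc]
        nlinarith [hdist, sq_nonneg r, norm_nonneg (T u u), hr]
  -- Step 2: the Banach model
  obtain ⟨M, hMj⟩ := hreflB
  letI := M.instGroup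
  letI := M.instSpace
  letI := M.instComplete
  have hinj : Function.Injective M.j := by
    intro x y hxy
    have h0 : n (x - y) = 0 := by
      rw [← M.isometry, map_sub, hxy, sub_self, norm_zero]
    exact sub_eq_zero.mp ((hnorm.1 (x - y)).mp h0)
  set e : ↥D ≃ₗ[ℂ] M.E := LinearEquiv.ofBijective M.j ⟨hinj, hMj⟩ with he
  have heq : ∀ ξ : ↥D, ‖e ξ‖ = n ξ := fun ξ => M.isometry ξ
  have hesymm : ∀ y : M.E, n (e.symm y) = ‖y‖ := fun y => by
    rw [← heq, e.apply_symm_apply]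
  -- T is sesquilinear
  have hTsesq : IsSesq T := by
    constructor
    · intro η
      constructor
      · intro x y
        have h1 := (hsesq.1 η).map_add x y
        have h2 := (hΥsesq.1 (η : H)).map_add (x : H) (y : H)
        simp only [hT, Submodule.coe_add, h1, h2]
        ring
      · intro c x
        have h1 := (hsesq.1 η).map_smul c x
        have h2 := (hΥsesq.1 (η : H)).map_smul c (x : H)
        simp only [hT, Submodule.coe_smul, h1, h2, smul_eq_mul]
        ring
    · intro ξ
      constructor
      · intro x y
        have h1 := (hsesq.2 ξ).map_add x y
        have h2 := (hΥsesq.2 (ξ : H)).map_add (x : H) (y : H)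
        simp only [hT, Submodule.coe_add, map_add, h1, h2]
        ring
      · intro c x
        have h1 := (hsesq.2 ξ).map_smul c x
        have h2 := (hΥsesq.2 (ξ : H)).map_smul c (x : H)
        simp only [hT, Submodule.coe_smul, map_add, h1, h2, smul_eq_mul]
        ring
  -- boundedness of T with respect to n
  set C' := max C 0 with hC'
  have hC'0 : 0 ≤ C' := le_max_right _ _
  have hΥb' : ∀ x y : H, ‖Υ x y‖ ≤ C' * ‖x‖ * ‖y‖ := by
    intro x y
    have h1 : C ≤ C' := le_max_left _ _
    calc ‖Υ x y‖ ≤ C * ‖x‖ * ‖y‖ := hΥb x y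
      _ ≤ C' * ‖x‖ * ‖y‖ := by
          apply mul_le_mul_of_nonneg_right _ (norm_nonneg y)
          exact mul_le_mul_of_nonneg_right h1 (norm_nonneg x)
  set β' := β + C' * α ^ 2 with hβ'
  have hβ'pos : 0 < β' := by have h := mul_nonneg hC'0 (sq_nonneg α); rw [hβ']; linarith
  have hnn : ∀ ξ : ↥D, 0 ≤ n ξ := fun ξ => (heq ξ) ▸ norm_nonneg _
  have hTb : ∀ ξ η : ↥D, ‖T ξ η‖ ≤ β' * n ξ * n η := by
    intro ξ η
    have h1 : ‖T ξ η‖ ≤ ‖Ω ξ η‖ + ‖Υ ↑ξ ↑η‖ := norm_add_le _ _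
    have h2 := hΩb ξ η
    have h3 := hΥb' (ξ : H) (η : H)
    have h4 := hemb ξ
    have h5 := hemb η
    have h6 : C' * ‖(ξ : H)‖ * ‖(η : H)‖ ≤ C' * (α * n ξ) * (α * n η) := by
      have h7 := mul_le_mul_of_nonneg_left
        (mul_le_mul h4 h5 (norm_nonneg _) (mul_nonneg hα.le (hnn ξ))) hC'0
      calc C' * ‖(ξ : H)‖ * ‖(η : H)‖ = C' * (‖(ξ : H)‖ * ‖(η : H)‖) := by ring
        _ ≤ C' * ((α * n ξ) * (α * n η)) := h7
        _ = C' * (α * n ξ) * (α * n η) := by ring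
    calc ‖T ξ η‖ ≤ ‖Ω ξ η‖ + ‖Υ ↑ξ ↑η‖ := h1
      _ ≤ β * n ξ * n η + C' * (α * n ξ) * (α * n η) := by linarith
      _ = β' * n ξ * n η := by rw [hβ']; ring
  -- Step 3: the operator f : M.E → Dual
  set lm : M.E → (M.E →ₗ[ℂ] ℂ) := fun x =>
    (IsLinearMap.mk' _ (hTsesq.2 (e.symm x))).comp (e.symm : M.E →ₗ[ℂ] ↥D) with hlm
  have hlmapp : ∀ x y : M.E, lm x y = (starRingEnd ℂ) (T (e.symm x) (e.symm y)) :=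
    fun x y => rfl
  have hf_bound : ∀ x y : M.E, ‖lm x y‖ ≤ β' * ‖x‖ * ‖y‖ := by
    intro x y
    rw [hlmapp, RCLike.norm_conj]
    calc ‖T (e.symm x) (e.symm y)‖ ≤ β' * n (e.symm x) * n (e.symm y) := hTb _ _
      _ = β' * ‖x‖ * ‖y‖ := by rw [hesymm, hesymm]
  set f : M.E → (M.E →L[ℂ] ℂ) := fun x =>
    LinearMap.mkContinuous (lm x) (β' * ‖x‖) (fun y => by
      rw [mul_assoc]; exact (hf_bound x y).trans_eq (mul_assoc _ _ _)) with hf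
  have hfapp : ∀ x y : M.E, f x y = (starRingEnd ℂ) (T (e.symm x) (e.symm y)) :=
    fun x y => rfl
  have hfnorm : ∀ x : M.E, ‖f x‖ ≤ β' * ‖x‖ := fun x =>
    LinearMap.mkContinuous_norm_le _ (mul_nonneg hβ'pos.le (norm_nonneg x)) _
  have hfadd : ∀ x y : M.E, f (x + y) = f x + f y := by
    intro x y
    ext z
    simp only [ContinuousLinearMap.add_apply, hfapp]
    rw [map_add e.symm x y, (hTsesq.1 (e.symm z)).map_add, map_add]
  have hfsmul : ∀ (c : ℂ) (x : M.E), f (c • x) = (starRingEnd ℂ) c • f x := by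
    intro c x
    ext z
    simp only [ContinuousLinearMap.smul_apply, hfapp, smul_eq_mul]
    rw [map_smul e.symm c x, (hTsesq.1 (e.symm z)).map_smul c (e.symm x),
      smul_eq_mul, map_mul]
  have hf0 : f 0 = 0 := by
    ext z
    show (starRingEnd ℂ) (T (e.symm 0) (e.symm z)) = 0
    rw [map_zero e.symm, (hTsesq.1 (e.symm z)).map_zero, map_zero]
  have hfsmulR : ∀ (r : ℝ) (x : M.E), f (r • x) = r • f x := by
    intro r x
    have h1 : r • x = ((r : ℂ)) • x := (Complex.coe_smul r x).symm
    have h2 : ((r : ℂ)) • f x = r • f x := Complex.coe_smul r (f x)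
    rw [h1, hfsmul, Complex.conj_ofReal, h2]
  -- Step 4: f is bounded below
  obtain ⟨c, hcpos, hclow⟩ : ∃ c : ℝ, 0 < c ∧ ∀ x : M.E, c * ‖x‖ ≤ ‖f x‖ := by
    by_contra hcon
    push_neg at hcon
    have hseq : ∀ k : ℕ, ∃ y : M.E, ‖y‖ = 1 ∧ ‖f y‖ < 1 / (k + 1) := by
      intro k
      obtain ⟨x, hx⟩ := hcon (1 / (k + 1)) (by positivity)
      have hx0 : x ≠ 0 := by
        rintro rfl
        rw [hf0, norm_zero, norm_zero, mul_zero] at hx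
        exact absurd hx (lt_irrefl 0)
      have hnx : 0 < ‖x‖ := norm_pos_iff.mpr hx0
      refine ⟨((‖x‖⁻¹ : ℝ) : ℂ) • x, ?_, ?_⟩
      · rw [norm_smul, Complex.norm_real, Real.norm_eq_abs, abs_inv,
          abs_of_nonneg (norm_nonneg _), inv_mul_cancel₀ hnx.ne']
      · rw [hfsmul, Complex.conj_ofReal, norm_smul (α := ℂ) ((‖x‖⁻¹ : ℝ) : ℂ) (f x),
          Complex.norm_real, Real.norm_eq_abs, abs_inv, abs_of_nonneg (norm_nonneg _)]
        have h2 : ‖x‖⁻¹ * ‖f x‖ < ‖x‖⁻¹ * (1 / (k + 1) * ‖x‖) :=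
          mul_lt_mul_of_pos_left hx (inv_pos.mpr hnx)
        have h3 : ‖x‖⁻¹ * (1 / (k + 1) * ‖x‖) = 1 / (k + 1) := by
          field_simp
        linarith
    choose y hy1 hy2 using hseq
    set ξs : ℕ → ↥D := fun k => e.symm (y k) with hξs
    have hn1 : ∀ k, n (ξs k) = 1 := fun k => by rw [hξs]; rw [hesymm, hy1]
    have h1k : Tendsto (fun k : ℕ => 1 / ((k : ℝ) + 1)) atTop (𝓝 0) :=
      tendsto_one_div_add_atTop_nhds_zero_nat
    have hTk : Tendsto (fun k => ‖T (ξs k) (ξs k)‖) atTop (𝓝 0) := by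
      apply squeeze_zero (fun k => norm_nonneg _) _ h1k
      intro k
      have h1 : ‖f (y k) (y k)‖ ≤ ‖f (y k)‖ * ‖y k‖ := (f (y k)).le_opNorm (y k)
      rw [hfapp, RCLike.norm_conj] at h1
      calc ‖T (ξs k) (ξs k)‖ ≤ ‖f (y k)‖ * ‖y k‖ := h1
        _ = ‖f (y k)‖ := by rw [hy1, mul_one]
        _ ≤ 1 / (k + 1) := (hy2 k).le
    have hsqk : Tendsto (fun k => ‖((ξs k : ↥D) : H)‖ ^ 2) atTop (𝓝 0) := by
      have hdinv : Tendsto (fun k => d⁻¹ * ‖T (ξs k) (ξs k)‖) atTop (𝓝 0) := by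
        simpa using hTk.const_mul d⁻¹
      apply squeeze_zero (fun k => by positivity) _ hdinv
      intro k
      have hk := hdle (ξs k)
      rw [inv_mul_eq_div, le_div_iff₀' hdpos]
      exact hk
    have hHk : Tendsto (fun k => ‖((ξs k : ↥D) : H)‖) atTop (𝓝 0) := by
      have hs := (Real.continuous_sqrt.tendsto 0).comp hsqk
      simp only [Function.comp_def, Real.sqrt_zero] at hs
      have heqk : ∀ k, Real.sqrt (‖((ξs k : ↥D) : H)‖ ^ 2) = ‖((ξs k : ↥D) : H)‖ :=
        fun k => Real.sqrt_sq (norm_nonneg _)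
      simpa only [heqk] using hs
    have hΥk : Tendsto (fun k => ‖Υ ((ξs k : ↥D) : H) ((ξs k : ↥D) : H)‖) atTop (𝓝 0) := by
      have hprod : Tendsto (fun k => C' * (‖((ξs k : ↥D) : H)‖ * ‖((ξs k : ↥D) : H)‖))
          atTop (𝓝 0) := by
        simpa using (hHk.mul hHk).const_mul C'
      apply squeeze_zero (fun k => norm_nonneg _) _ hprod
      intro k
      calc ‖Υ _ _‖ ≤ C' * ‖((ξs k : ↥D) : H)‖ * ‖((ξs k : ↥D) : H)‖ := hΥb' _ _
        _ = C' * (‖((ξs k : ↥D) : H)‖ * ‖((ξs k : ↥D) : H)‖) := by ring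
    have hΩk : Tendsto (fun k => ‖Ω (ξs k) (ξs k)‖) atTop (𝓝 0) := by
      have hsum : Tendsto (fun k => ‖T (ξs k) (ξs k)‖ +
          ‖Υ ((ξs k : ↥D) : H) ((ξs k : ↥D) : H)‖) atTop (𝓝 0) := by
        simpa using hTk.add hΥk
      apply squeeze_zero (fun k => norm_nonneg _) _ hsum
      intro k
      have : Ω (ξs k) (ξs k) =
          T (ξs k) (ξs k) - Υ ((ξs k : ↥D) : H) ((ξs k : ↥D) : H) := by simp [hT]
      rw [this]
      exact (norm_sub_le _ _)
    have hfinal := hqc ξs hHk hΩk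
    have : Tendsto (fun _ : ℕ => (1 : ℝ)) atTop (𝓝 0) := by
      simpa only [hn1] using hfinal
    exact one_ne_zero (tendsto_nhds_unique tendsto_const_nhds this)
  -- Step 5: right kernel trivial
  have hker : ∀ x : M.E, (∀ z : M.E, f z x = 0) → x = 0 := by
    intro x hx
    have h := hx x
    rw [hfapp] at h
    have hT0 : T (e.symm x) (e.symm x) = 0 := by
      have := congrArg (starRingEnd ℂ) h
      simpa using this
    have hle := hdle (e.symm x)
    rw [hT0, norm_zero] at hle
    have hn0 : ‖((e.symm x : ↥D) : H)‖ = 0 := by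
      by_contra h'
      have hpos : 0 < ‖((e.symm x : ↥D) : H)‖ := lt_of_le_of_ne (norm_nonneg _) (Ne.symm h')
      have := mul_pos hdpos (pow_pos hpos 2)
      linarith
    have hz : (e.symm x : ↥D) = 0 := by
      exact_mod_cast norm_eq_zero.mp hn0
    calc x = e (e.symm x) := (e.apply_symm_apply x).symm
      _ = 0 := by rw [hz, map_zero]
  -- Step 6: surjectivity of f
  have hsurj : ∀ g : M.E →L[ℂ] ℂ, ∃ x : M.E, f x = g := by
    have hclosed : IsClosed (Set.range f) := by
      set A : M.E →L[ℝ] (M.E →L[ℂ] ℂ) :=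
        LinearMap.mkContinuous
          { toFun := f
            map_add' := hfadd
            map_smul' := fun r x => by simp only [RingHom.id_apply]; exact hfsmulR r x }
          β' (fun x => by simpa using hfnorm x) with hA
      have hAf : ∀ x, A x = f x := fun x => rfl
      have hanti : AntilipschitzWith (Real.toNNReal c⁻¹) A := by
        apply A.antilipschitz_of_bound
        intro x
        rw [Real.coe_toNNReal _ (inv_nonneg.mpr hcpos.le), hAf]
        calc ‖x‖ = c⁻¹ * (c * ‖x‖) := by
              rw [← mul_assoc, inv_mul_cancel₀ hcpos.ne', one_mul]
          _ ≤ c⁻¹ * ‖f x‖ :=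
              mul_le_mul_of_nonneg_left (hclow x) (inv_nonneg.mpr hcpos.le)
      have hcl := hanti.isClosed_range A.uniformContinuous
      have : Set.range f = Set.range A := rfl
      rw [this]
      exact hcl
    intro g
    by_contra hg
    push_neg at hg
    set Rsub : Submodule ℂ (M.E →L[ℂ] ℂ) :=
      { carrier := Set.range f
        add_mem' := by
          rintro _ _ ⟨x, rfl⟩ ⟨z, rfl⟩
          exact ⟨x + z, hfadd x z⟩
        zero_mem' := ⟨0, hf0⟩
        smul_mem' := by
          rintro cc _ ⟨x, rfl⟩
          refine ⟨(starRingEnd ℂ) cc • x, ?_⟩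
          rw [hfsmul]
          simp } with hRsub
    obtain ⟨φ, hφg, hφ0⟩ := sep_lemma' Rsub hclosed g (by
      intro hmem
      obtain ⟨x, hx⟩ := hmem
      exact hg x hx)
    obtain ⟨x, hx⟩ := M.reflexive φ
    have hzero : ∀ z : M.E, f z x = 0 := by
      intro z
      have h1 : φ (f z) = 0 := hφ0 (f z) ⟨z, rfl⟩
      have h2 : φ (f z) = f z x := by
        rw [← hx]
        rfl
      rw [← h2, h1]
    have hx0 : x = 0 := hker x hzero
    rw [hx0] at hx
    have : φ = 0 := by rw [← hx, map_zero]
    rw [this] at hφg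
    exact hφg rfl
  -- Step 7: conclusion
  have hfin1 : ∀ ξ : ↥D, (∀ η : ↥D, Ω ξ η + Υ ↑ξ ↑η = 0) → ξ = 0 := by
    intro ξ hξ
    have h : T ξ ξ = 0 := hξ ξ
    have hle := hdle ξ
    rw [h, norm_zero] at hle
    have hn0 : ‖(ξ : H)‖ = 0 := by
      by_contra h'
      have hpos : 0 < ‖(ξ : H)‖ := lt_of_le_of_ne (norm_nonneg _) (Ne.symm h')
      have := mul_pos hdpos (pow_pos hpos 2)
      linarith
    exact_mod_cast norm_eq_zero.mp hn0
  have hfin2 : ∀ Λ : ↥D → ℂ, MemConjDual D n Λ →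
      ∃ ξ : ↥D, ∀ η : ↥D, Λ η = Ω ξ η + Υ ↑ξ ↑η := by
    intro Λ hΛ
    obtain ⟨hadd, hsmul, CΛ, hCb⟩ := hΛ
    have hlinmap : IsLinearMap ℂ fun y : M.E => (starRingEnd ℂ) (Λ (e.symm y)) := by
      constructor
      · intro a b
        rw [map_add, hadd, map_add]
      · intro cc a
        rw [map_smul, hsmul, map_mul]
        simp [Complex.conj_conj, smul_eq_mul]
    set gl : M.E →ₗ[ℂ] ℂ := IsLinearMap.mk' _ hlinmap with hgl
    have hgb : ∀ y : M.E, ‖gl y‖ ≤ CΛ * ‖y‖ := by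
      intro y
      have h1 : gl y = (starRingEnd ℂ) (Λ (e.symm y)) := rfl
      rw [h1, RCLike.norm_conj]
      calc ‖Λ (e.symm y)‖ ≤ CΛ * n (e.symm y) := hCb _
        _ = CΛ * ‖y‖ := by rw [hesymm]
    obtain ⟨x, hx⟩ := hsurj (gl.mkContinuous CΛ hgb)
    refine ⟨e.symm x, fun η => ?_⟩
    have h1 : f x (e η) = (gl.mkContinuous CΛ hgb) (e η) := by rw [hx]
    have h2 : f x (e η) = (starRingEnd ℂ) (T (e.symm x) η) := by
      rw [hfapp, e.symm_apply_apply]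
    have h3 : (gl.mkContinuous CΛ hgb) (e η) = (starRingEnd ℂ) (Λ η) := by
      have : (gl.mkContinuous CΛ hgb) (e η) = gl (e η) := rfl
      rw [this]
      have : gl (e η) = (starRingEnd ℂ) (Λ (e.symm (e η))) := rfl
      rw [this, e.symm_apply_apply]
    have h4 : (starRingEnd ℂ) (T (e.symm x) η) = (starRingEnd ℂ) (Λ η) := by
      rw [← h2, h1, h3]
    have h5 := congrArg (starRingEnd ℂ) h4
    simpa using h5.symm
  exact ⟨⟨hfin1, hfin2⟩,
    ⟨⟨hnorm, ⟨⟨α, hα, hemb⟩, hcomp2⟩, ⟨M, hMj⟩, ⟨β, hβ, hΩb⟩⟩,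
      Υ, ⟨hΥsesq, C, hΥb⟩, hfin1, hfin2⟩⟩


end Paper
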